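/- Let L = ℤ⁹ with basis h, e₀, e₁, …, e₇, equipped with the symmetric bilinear form ⟨·,·⟩ determined by ⟨h,h⟩ = 1, ⟨eᵢ,eᵢ⟩ = −1 for 0 ≤ i ≤ 7, and all distinct basis vectors pairwise orthogonal. The set of vectors in L orthogonal to all eight vectors h, 3h − 2e₀ − e₁ − e₂ − e₃ − e₄ − e₅ − e₆, e₁ − e₇, e₂ − e₁, e₃ − e₂, e₄ − e₃, e₅ − e₄, e₆ − e₅ is exactly the set of integer multiples of w = 3e₀ − e₁ − e₂ − e₃ − e₄ − e₅ − e₆ − e₇. Moreover ⟨w,w⟩ = −16; consequently, no vector in this orthogonal complement has self-pairing −4. -/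

import Mathlib

/-- The intersection form of `CP² # 8 (−CP²)` on `ℤ⁹`, where index `0` corresponds to the
class `h` (with `⟨h,h⟩ = 1`) and index `i.succ` corresponds to the exceptional class `eᵢ`
(with `⟨eᵢ,eᵢ⟩ = −1`), all basis vectors being pairwise orthogonal. -/
def B9 (x y : Fin 9 → ℤ) : ℤ := x 0 * y 0 - ∑ i : Fin 8, x i.succ * y i.succ

/-- The hyperplane class `h`. -/
def H9 : Fin 9 → ℤ := Pi.single 0 1

/-- The exceptional class `eᵢ`, `0 ≤ i ≤ 7`. -/
def E9 (i : Fin 8) : Fin 9 → ℤ := Pi.single i.succ 1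

/-- The class `w = 3e₀ − e₁ − e₂ − e₃ − e₄ − e₅ − e₆ − e₇`. -/
def wV1 : Fin 9 → ℤ :=
  (3 : ℤ) • E9 0 - E9 1 - E9 2 - E9 3 - E9 4 - E9 5 - E9 6 - E9 7

/-- Orthogonality to the eight classes of the resolution configuration complementary
to the filling `V₁`. -/
def V1orth (x : Fin 9 → ℤ) : Prop :=
  B9 x H9 = 0 ∧
  B9 x ((3 : ℤ) • H9 - (2 : ℤ) • E9 0 - E9 1 - E9 2 - E9 3 - E9 4 - E9 5 - E9 6) = 0 ∧
  B9 x (E9 1 - E9 7) = 0 ∧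
  B9 x (E9 2 - E9 1) = 0 ∧
  B9 x (E9 3 - E9 2) = 0 ∧
  B9 x (E9 4 - E9 3) = 0 ∧
  B9 x (E9 5 - E9 4) = 0 ∧
  B9 x (E9 6 - E9 5) = 0

lemma B9_sub (x y z : Fin 9 → ℤ) : B9 x (y - z) = B9 x y - B9 x z := by
  simp [B9, mul_sub, Finset.sum_sub_distrib]; ring
lemma B9_smul (x y : Fin 9 → ℤ) (c : ℤ) : B9 x (c • y) = c * B9 x y := by
  unfold B9
  rw [mul_sub, Finset.mul_sum]
  congr 1
  · simp; ring
  · exact Finset.sum_congr rfl fun i _ => by simp; ring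
lemma B9_H (x : Fin 9 → ℤ) : B9 x H9 = x 0 := by
  simp [B9, H9, Pi.single_apply, Fin.succ_ne_zero]
lemma B9_E (x : Fin 9 → ℤ) (i : Fin 8) : B9 x (E9 i) = -x i.succ := by
  have s : ∀ i : Fin 8, ∀ j : Fin 8, (j.succ = i.succ) = (j = i) := by
    simp [Fin.succ_inj]
  simp [B9, E9, Pi.single_apply, s, Finset.sum_ite_eq, (Fin.succ_ne_zero i).symm]

lemma V1orth_iff (x : Fin 9 → ℤ) : V1orth x ↔
    (x 0 = 0 ∧ 3 * x 0 - 2 * x 1 - x 2 - x 3 - x 4 - x 5 - x 6 - x 7 = 0 ∧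
     x 8 - x 2 = 0 ∧ x 2 - x 3 = 0 ∧ x 3 - x 4 = 0 ∧ x 4 - x 5 = 0 ∧
     x 5 - x 6 = 0 ∧ x 6 - x 7 = 0) := by
  simp only [V1orth, B9_sub, B9_smul, B9_H, B9_E,
    show (0:Fin 8).succ = (1:Fin 9) from rfl, show (1:Fin 8).succ = (2:Fin 9) from rfl,
    show (2:Fin 8).succ = (3:Fin 9) from rfl, show (3:Fin 8).succ = (4:Fin 9) from rfl,
    show (4:Fin 8).succ = (5:Fin 9) from rfl, show (5:Fin 8).succ = (6:Fin 9) from rfl,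
    show (6:Fin 8).succ = (7:Fin 9) from rfl, show (7:Fin 8).succ = (8:Fin 9) from rfl]
  constructor <;> rintro ⟨a,b,c,d,e,f,g,h⟩ <;> refine ⟨by omega, by omega, by omega, by omega, by omega, by omega, by omega, by omega⟩

lemma wV1_eq : wV1 = ![0,3,-1,-1,-1,-1,-1,-1,-1] := by decide

lemma B9_comm (x y : Fin 9 → ℤ) : B9 x y = B9 y x := by
  unfold B9
  rw [mul_comm]
  congr 1
  exact Finset.sum_congr rfl fun i _ => by ring

lemma B9_w : B9 wV1 wV1 = -16 := by decide


/-- The orthogonal complement of the eight listed classes is exactly the set of integer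
multiples of `w`; moreover `⟨w,w⟩ = −16`, and consequently no vector in the orthogonal
complement has self-pairing `−4`. -/
theorem stmt_14 :
    (∀ x : Fin 9 → ℤ, V1orth x ↔ ∃ n : ℤ, x = n • wV1) ∧
    B9 wV1 wV1 = -16 ∧
    (¬ ∃ x : Fin 9 → ℤ, V1orth x ∧ B9 x x = -4) := by
  have hmain : ∀ x : Fin 9 → ℤ, V1orth x ↔ ∃ n : ℤ, x = n • wV1 := by
    intro x
    rw [V1orth_iff]
    constructor
    · rintro ⟨a,b,c,d,e,f,g,h⟩
      refine ⟨-x 2, ?_⟩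
      funext i
      rw [wV1_eq]
      fin_cases i <;> simp [show ![0,3,-1,-1,-1,-1,-1,-1,-1] (5:Fin 9) = -1 from rfl, show ![0,3,-1,-1,-1,-1,-1,-1,-1] (6:Fin 9) = -1 from rfl, show ![0,3,-1,-1,-1,-1,-1,-1,-1] (7:Fin 9) = -1 from rfl, show ![0,3,-1,-1,-1,-1,-1,-1,-1] (8:Fin 9) = -1 from rfl] <;> omega
    · rintro ⟨n, rfl⟩
      rw [wV1_eq]
      norm_num [show ![0,3,-1,-1,-1,-1,-1,-1,-1] (2:Fin 9) = -1 from rfl, show ![0,3,-1,-1,-1,-1,-1,-1,-1] (3:Fin 9) = -1 from rfl, show ![0,3,-1,-1,-1,-1,-1,-1,-1] (4:Fin 9) = -1 from rfl, show ![0,3,-1,-1,-1,-1,-1,-1,-1] (5:Fin 9) = -1 from rfl, show ![0,3,-1,-1,-1,-1,-1,-1,-1] (6:Fin 9) = -1 from rfl, show ![0,3,-1,-1,-1,-1,-1,-1,-1] (7:Fin 9) = -1 from rfl, show ![0,3,-1,-1,-1,-1,-1,-1,-1] (8:Fin 9) = -1 from rfl]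
      omega
  refine ⟨hmain, B9_w, ?_⟩
  rintro ⟨x, hx, hB⟩
  obtain ⟨n, rfl⟩ := (hmain x).1 hx
  rw [B9_smul, B9_comm, B9_smul, B9_w] at hB
  rcases (by omega : n = 0 ∨ 1 ≤ n ∨ n ≤ -1) with h | h | h
  · simp [h] at hB
  · nlinarith
  · nlinarith
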